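/- Assume γ is of class C¹, f₀ is differentiable, and ∂_j f₀(x) = γ̄(x) for every x ∈ ℝ^m. Then there exists a constant C ≥ 0 such that for every N > 0 and every x ∈ [0,1]^m, the map f₁ = CP_γ(f₀, ∂_j, N) satisfies ‖∂_j f₁(x) − γ(x, N·x_j)‖ ≤ C/N. (Property (P₃) of the Corrugation Process: ∂_j f₁(x) = γ(x, N x_j) + O(1/N).) -/

import Mathlib

open MeasureTheory intervalIntegral Set Function

set_option linter.unusedSectionVars false
set_option linter.unusedVariables false
set_option maxHeartbeats 1000000

section Aux

variable {H : Type*} [NormedAddCommGroup H] [NormedSpace ℝ H] [ProperSpace H]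
  {E : Type*} [NormedAddCommGroup E] [NormedSpace ℝ E] [CompleteSpace E]
  {F : H → ℝ → E}

/-- The partial derivative of `F` in the first variable. -/
noncomputable def pd (F : H → ℝ → E) (x : H) (s : ℝ) : H →L[ℝ] E :=
  fderiv ℝ (fun y => F y s) x

/-- The primitive in the second variable of the partial derivative in the first. -/
noncomputable def primCLM (F : H → ℝ → E) (x : H) (t : ℝ) : H →L[ℝ] E :=
  ∫ s in (0:ℝ)..t, pd F x s

theorem pd_eq (hF : ContDiff ℝ 1 fun p : H × ℝ => F p.1 p.2) (x : H) (s : ℝ) :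
    pd F x s = (fderiv ℝ (fun p : H × ℝ => F p.1 p.2) (x, s)).comp
      (ContinuousLinearMap.inl ℝ H ℝ) := by
  have hD : HasFDerivAt (fun p : H × ℝ => F p.1 p.2)
      (fderiv ℝ (fun p : H × ℝ => F p.1 p.2) (x, s)) (x, s) :=
    ((hF.differentiable one_ne_zero) (x, s)).hasFDerivAt
  have h : HasFDerivAt (fun y => F y s)
      ((fderiv ℝ (fun p : H × ℝ => F p.1 p.2) (x, s)).comp (ContinuousLinearMap.inl ℝ H ℝ)) x :=
    hD.comp x (f := fun y => (y, s)) (hasFDerivAt_prodMk_left x s)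
  exact h.fderiv


theorem hasFDerivAt_pd (hF : ContDiff ℝ 1 fun p : H × ℝ => F p.1 p.2) (x : H) (s : ℝ) :
    HasFDerivAt (fun y => F y s) (pd F x s) x := by
  have hD : HasFDerivAt (fun p : H × ℝ => F p.1 p.2)
      (fderiv ℝ (fun p : H × ℝ => F p.1 p.2) (x, s)) (x, s) :=
    ((hF.differentiable one_ne_zero) (x, s)).hasFDerivAt
  have h : HasFDerivAt (fun y => F y s)
      ((fderiv ℝ (fun p : H × ℝ => F p.1 p.2) (x, s)).comp (ContinuousLinearMap.inl ℝ H ℝ)) x :=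
    hD.comp x (f := fun y => (y, s)) (hasFDerivAt_prodMk_left x s)
  rw [pd_eq hF]
  exact h


theorem continuous_pd (hF : ContDiff ℝ 1 fun p : H × ℝ => F p.1 p.2) :
    Continuous fun p : H × ℝ => pd F p.1 p.2 := by
  have : Continuous fun p : H × ℝ => fderiv ℝ (fun p : H × ℝ => F p.1 p.2) p :=
    hF.continuous_fderiv one_ne_zero
  have h2 : Continuous fun p : H × ℝ =>
      (fderiv ℝ (fun p : H × ℝ => F p.1 p.2) p).comp (ContinuousLinearMap.inl ℝ H ℝ) :=
    this.clm_comp continuous_const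
  exact h2.congr fun p => by rw [pd_eq hF]


theorem contF_slice (hF : ContDiff ℝ 1 fun p : H × ℝ => F p.1 p.2) (x : H) :
    Continuous fun s => F x s :=
  hF.continuous.comp (Continuous.prodMk_right x)

theorem contpd_slice (hF : ContDiff ℝ 1 fun p : H × ℝ => F p.1 p.2) (x : H) :
    Continuous fun s => pd F x s :=
  (continuous_pd hF).comp (Continuous.prodMk_right x)

/-- P2: derivative in the parameter of an interval integral with fixed endpoints. -/


theorem hasFDerivAt_parametric (hF : ContDiff ℝ 1 fun p : H × ℝ => F p.1 p.2)
    (a b : ℝ) (x₀ : H) :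
    HasFDerivAt (fun x => ∫ s in a..b, F x s) (∫ s in a..b, pd F x₀ s) x₀ := by
  haveI : SecondCountableTopologyEither ℝ (H →L[ℝ] E) := ⟨Or.inl inferInstance⟩
  obtain ⟨M, hM⟩ := ((isCompact_closedBall x₀ 1).prod isCompact_uIcc).exists_bound_of_continuousOn
    (continuous_pd hF).continuousOn
  apply intervalIntegral.hasFDerivAt_integral_of_dominated_of_fderiv_le (s := Metric.ball x₀ 1)
    (bound := fun _ => M) (F' := fun x t => pd F x t) (Metric.ball_mem_nhds x₀ one_pos)
  · exact Filter.Eventually.of_forall fun x => (contF_slice hF x).aestronglyMeasurable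
  · exact (contF_slice hF x₀).intervalIntegrable a b
  · exact (contpd_slice hF x₀).aestronglyMeasurable
  · refine Filter.Eventually.of_forall fun t ht x hx => hM ((x, t) : H × ℝ) ?_
    exact ⟨Metric.ball_subset_closedBall hx, uIoc_subset_uIcc ht⟩
  · exact intervalIntegrable_const
  · exact Filter.Eventually.of_forall fun t _ x _ => hasFDerivAt_pd hF x t


theorem hasFDerivAt_parametric' (hF : ContDiff ℝ 1 fun p : H × ℝ => F p.1 p.2)
    (b : ℝ) (x₀ : H) :
    HasFDerivAt (fun x => ∫ s in (0:ℝ)..b, F x s) (primCLM F x₀ b) x₀ :=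
  hasFDerivAt_parametric hF 0 b x₀


theorem hasFDerivAt_prim_snd (hF : Continuous fun p : H × ℝ => F p.1 p.2) (x₀ : H) (t₀ : ℝ) :
    HasFDerivAt (fun p : H × ℝ => ∫ s in t₀..p.2, F p.1 s)
      ((ContinuousLinearMap.snd ℝ H ℝ).smulRight (F x₀ t₀)) (x₀, t₀) := by
  rw [hasFDerivAt_iff_isLittleO_nhds_zero, Asymptotics.isLittleO_iff]
  intro c hc
  have htend : Filter.Tendsto (fun q : H × ℝ => ‖F q.1 q.2 - F x₀ t₀‖)
      (nhds (x₀, t₀)) (nhds 0) := by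
    have : Continuous fun q : H × ℝ => ‖F q.1 q.2 - F x₀ t₀‖ :=
      (hF.sub continuous_const).norm
    simpa using this.tendsto (x₀, t₀)
  have hev : ∀ᶠ q : H × ℝ in nhds (x₀, t₀), ‖F q.1 q.2 - F x₀ t₀‖ ≤ c := by
    filter_upwards [htend (IsOpen.mem_nhds isOpen_Iio (by simpa using hc))] with q hq
    exact le_of_lt hq
  obtain ⟨δ, hδ, hball⟩ := Metric.eventually_nhds_iff.1 hev
  refine Metric.eventually_nhds_iff.2 ⟨δ, hδ, fun h hp => ?_⟩
  have hnorm : dist h 0 = max ‖h.1‖ ‖h.2‖ := by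
    rw [dist_zero_right, Prod.norm_def]
  have hsub : ∀ s ∈ Set.uIoc t₀ (t₀ + h.2), ‖F (x₀ + h.1) s - F x₀ t₀‖ ≤ c := by
    intro s hs
    have hst : |s - t₀| ≤ |h.2| := by
      rcases Set.mem_uIoc.mp hs with ⟨h1, h2⟩ | ⟨h1, h2⟩
      · rw [abs_of_pos (sub_pos.2 h1)]
        exact le_trans (by linarith) (le_abs_self _)
      · rw [abs_sub_comm, abs_of_nonneg (sub_nonneg.2 h2)]
        calc t₀ - s ≤ -h.2 := by linarith
        _ ≤ |h.2| := neg_le_abs _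
    refine hball (show dist ((x₀ + h.1, s) : H × ℝ) (x₀, t₀) < δ from ?_)
    calc dist ((x₀ + h.1, s) : H × ℝ) (x₀, t₀) = max (dist (x₀ + h.1) x₀) (dist s t₀) :=
          Prod.dist_eq
    _ ≤ max ‖h.1‖ ‖h.2‖ := by
        refine max_le_max (le_of_eq ?_) ?_
        · rw [dist_eq_norm]; simp
        · rw [Real.dist_eq, Real.norm_eq_abs]; exact hst
    _ = dist h 0 := hnorm.symm
    _ < δ := hp
  have hFi : IntervalIntegrable (fun s => F (x₀ + h.1) s) volume t₀ (t₀ + h.2) :=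
    (hF.comp (Continuous.prodMk_right (x₀ + h.1))).intervalIntegrable _ _
  have key : (∫ s in t₀..(t₀ + h.2), F (x₀ + h.1) s) - h.2 • F x₀ t₀
      = ∫ s in t₀..(t₀ + h.2), (F (x₀ + h.1) s - F x₀ t₀) := by
    rw [intervalIntegral.integral_sub hFi intervalIntegrable_const,
      intervalIntegral.integral_const, add_sub_cancel_left]
  have hL : ((ContinuousLinearMap.snd ℝ H ℝ).smulRight (F x₀ t₀)) h = h.2 • F x₀ t₀ := by
    simp
  simp only [Prod.fst_add, Prod.snd_add, hL]
  rw [intervalIntegral.integral_same, sub_zero, key]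
  calc ‖∫ s in t₀..(t₀ + h.2), (F (x₀ + h.1) s - F x₀ t₀)‖ ≤ c * |t₀ + h.2 - t₀| :=
        intervalIntegral.norm_integral_le_of_norm_le_const hsub
    _ ≤ c * ‖h‖ := by
        refine mul_le_mul_of_nonneg_left ?_ (le_of_lt hc)
        rw [add_sub_cancel_left, Prod.norm_def]
        exact le_max_right _ _


theorem hasFDerivAt_prim (hF : ContDiff ℝ 1 fun p : H × ℝ => F p.1 p.2) (x₀ : H) (t₀ : ℝ) :
    HasFDerivAt (fun p : H × ℝ => ∫ s in (0:ℝ)..p.2, F p.1 s)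
      ((∫ s in (0:ℝ)..t₀, pd F x₀ s).comp (ContinuousLinearMap.fst ℝ H ℝ)
        + (ContinuousLinearMap.snd ℝ H ℝ).smulRight (F x₀ t₀)) (x₀, t₀) := by
  have h1 : HasFDerivAt (fun p : H × ℝ => ∫ s in (0:ℝ)..t₀, F p.1 s)
      ((∫ s in (0:ℝ)..t₀, pd F x₀ s).comp (ContinuousLinearMap.fst ℝ H ℝ)) (x₀, t₀) :=
    by have := (hasFDerivAt_parametric hF 0 t₀ x₀).comp (x₀, t₀) (f := Prod.fst) hasFDerivAt_fst; exact this
  have h2 := hasFDerivAt_prim_snd hF.continuous x₀ t₀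
  have h3 := h1.add h2
  refine h3.congr_of_eventuallyEq (Filter.Eventually.of_forall fun p => ?_)
  have hi : ∀ c d : ℝ, IntervalIntegrable (fun s => F p.1 s) volume c d := fun c d =>
    (hF.continuous.comp (Continuous.prodMk_right p.1)).intervalIntegrable c d
  show (∫ s in (0:ℝ)..p.2, F p.1 s) = _
  rw [← intervalIntegral.integral_add_adjacent_intervals (hi 0 t₀) (hi t₀ p.2)]
  rfl


end Aux

noncomputable def loopAverage {m n : ℕ}
    (γ : (Fin m → ℝ) → ℝ → EuclideanSpace ℝ (Fin n)) (x : Fin m → ℝ) :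
    EuclideanSpace ℝ (Fin n) :=
  ∫ s in (0:ℝ)..1, γ x s

noncomputable def corrugationProcess {m n : ℕ}
    (f₀ : (Fin m → ℝ) → EuclideanSpace ℝ (Fin n))
    (γ : (Fin m → ℝ) → ℝ → EuclideanSpace ℝ (Fin n)) (j : Fin m) (N : ℝ) :
    (Fin m → ℝ) → EuclideanSpace ℝ (Fin n) :=
  fun x => f₀ x + N⁻¹ • ∫ s in (0:ℝ)..(N * x j), (γ x s - loopAverage γ x)

theorem corrugationProcess_P3 {m n : ℕ} (hm : 1 ≤ m) (hn : 1 ≤ n) (j : Fin m)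
    (f₀ : (Fin m → ℝ) → EuclideanSpace ℝ (Fin n))
    (γ : (Fin m → ℝ) → ℝ → EuclideanSpace ℝ (Fin n))
    (hγ_C1 : ContDiff ℝ 1 fun p : (Fin m → ℝ) × ℝ => γ p.1 p.2)
    (hγ_per : ∀ x t, γ x (t + 1) = γ x t)
    (hf₀ : Differentiable ℝ f₀)
    (havg : ∀ x : Fin m → ℝ, fderiv ℝ f₀ x (Pi.single j 1) = loopAverage γ x) :
    ∃ C : ℝ, 0 ≤ C ∧ ∀ N : ℝ, 0 < N → ∀ x : Fin m → ℝ,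
      (∀ i, x i ∈ Set.Icc (0:ℝ) 1) →
      ‖fderiv ℝ (corrugationProcess f₀ γ j N) x (Pi.single j 1)
        - γ x (N * x j)‖ ≤ C / N := by
  set e : Fin m → ℝ := Pi.single j 1 with he
  have hDγc : Continuous fun p : (Fin m → ℝ) × ℝ => pd γ p.1 p.2 := continuous_pd hγ_C1
  have hγc : Continuous fun p : (Fin m → ℝ) × ℝ => γ p.1 p.2 := hγ_C1.continuous
  have hiDγ : ∀ (x : Fin m → ℝ) (c d : ℝ), IntervalIntegrable (fun s => pd γ x s) volume c d :=
    fun x c d => (hDγc.comp (Continuous.prodMk_right x)).intervalIntegrable c d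
  have hiγ : ∀ (x : Fin m → ℝ) (c d : ℝ), IntervalIntegrable (fun s => γ x s) volume c d :=
    fun x c d => (hγc.comp (Continuous.prodMk_right x)).intervalIntegrable c d
  -- the bound
  obtain ⟨M0, hM0⟩ := ((isCompact_Icc (a := (0 : Fin m → ℝ)) (b := 1)).prod
    (isCompact_Icc (a := (0:ℝ)) (b := 1))).exists_bound_of_continuousOn hDγc.continuousOn
  set M := max M0 0 with hM
  have hMnn : 0 ≤ M := le_max_right _ _
  set R : (Fin m → ℝ) → ℝ → EuclideanSpace ℝ (Fin n) := fun x T => primCLM γ x T e - T • (primCLM γ x 1 e) with hR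
  refine ⟨2 * M * ‖e‖, by positivity, ?_⟩
  -- bound on ‖primCLM γ x t‖ for x,t in the unit ranges
  have hAb : ∀ x ∈ Icc (0 : Fin m → ℝ) 1, ∀ t ∈ Icc (0:ℝ) 1, ‖primCLM γ x t‖ ≤ M := by
    intro x hx t ht
    have h1 : ‖primCLM γ x t‖ ≤ M * |t - 0| := by
      unfold primCLM
      refine intervalIntegral.norm_integral_le_of_norm_le_const fun s hs => ?_
      have hs' : s ∈ Icc (0:ℝ) 1 := by
        have := uIoc_subset_uIcc hs
        rw [Set.uIcc_of_le ht.1] at this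
        exact ⟨this.1, this.2.trans ht.2⟩
      exact le_trans (hM0 (x, s) ⟨hx, hs'⟩) (le_max_left _ _)
    have : M * |t - 0| ≤ M * 1 := by
      refine mul_le_mul_of_nonneg_left ?_ hMnn
      rw [sub_zero, abs_of_nonneg ht.1]; exact ht.2
    linarith
  have hRb : ∀ x ∈ Icc (0 : Fin m → ℝ) 1, ∀ T ∈ Icc (0:ℝ) 1, ‖R x T‖ ≤ 2 * M * ‖e‖ := by
    intro x hx T hT
    have h1 : ‖primCLM γ x T e‖ ≤ M * ‖e‖ :=
      le_trans ((primCLM γ x T).le_opNorm e) (mul_le_mul_of_nonneg_right (hAb x hx T hT) (norm_nonneg _))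
    have h2 : ‖T • (primCLM γ x 1 e)‖ ≤ M * ‖e‖ := by
      rw [norm_smul, Real.norm_eq_abs, abs_of_nonneg hT.1]
      calc T * ‖primCLM γ x 1 e‖ ≤ 1 * ‖primCLM γ x 1 e‖ :=
            mul_le_mul_of_nonneg_right hT.2 (norm_nonneg _)
      _ = ‖primCLM γ x 1 e‖ := one_mul _
      _ ≤ M * ‖e‖ := le_trans ((primCLM γ x 1).le_opNorm e)
            (mul_le_mul_of_nonneg_right (hAb x hx 1 ⟨zero_le_one, le_rfl⟩) (norm_nonneg _))
    calc ‖R x T‖ ≤ ‖primCLM γ x T e‖ + ‖T • (primCLM γ x 1 e)‖ := norm_sub_le _ _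
    _ ≤ 2 * M * ‖e‖ := by linarith
  -- periodicity of R x
  have hDper : ∀ x : Fin m → ℝ, Periodic (fun s => pd γ x s) 1 := by
    intro x s
    show pd γ x (s + 1) = pd γ x s
    unfold pd
    exact congrFun (congrArg (fderiv ℝ) (funext fun y => hγ_per y s)) x
  have hAadd : ∀ (x : Fin m → ℝ) (T : ℝ), primCLM γ x (T + 1) = primCLM γ x T + primCLM γ x 1 := by
    intro x T
    have h1 : primCLM γ x T + (∫ s in T..(T+1), pd γ x s) = primCLM γ x (T + 1) :=
      intervalIntegral.integral_add_adjacent_intervals (hiDγ x 0 T) (hiDγ x T (T+1))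
    have h2 : (∫ s in T..(T+1), pd γ x s) = primCLM γ x 1 := by
      have := (hDper x).intervalIntegral_add_eq T 0
      rw [zero_add] at this
      exact this
    rw [← h1, h2]
  have hRper : ∀ x : Fin m → ℝ, Periodic (R x) 1 := by
    intro x T
    show primCLM γ x (T + 1) e - (T + 1) • (primCLM γ x 1 e) = primCLM γ x T e - T • (primCLM γ x 1 e)
    rw [hAadd, ContinuousLinearMap.add_apply, add_smul, one_smul]
    abel
  have hRfract : ∀ (x : Fin m → ℝ) (T : ℝ), R x T = R x (Int.fract T) := by
    intro x T
    have h := (hRper x).sub_int_mul_eq (x := T) (n := ⌊T⌋)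
    rw [mul_one] at h
    rw [← Int.self_sub_floor]
    exact h.symm
  -- main estimate
  intro N hN x hx
  set T' := N * x j with hT'
  -- derivative of the corrugation process
  set π : (Fin m → ℝ) →L[ℝ] ℝ := ContinuousLinearMap.proj j with hπdef
  have hj : HasFDerivAt (fun y : Fin m → ℝ => y j) π x := π.hasFDerivAt
  have hNj : HasFDerivAt (fun y : Fin m → ℝ => N * y j) (N • π) x :=
    hj.const_mul N
  have hσ : HasFDerivAt (fun y : Fin m → ℝ => ((y, N * y j) : (Fin m → ℝ) × ℝ))
      ((ContinuousLinearMap.id ℝ (Fin m → ℝ)).prod (N • π)) x :=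
    HasFDerivAt.prodMk (hasFDerivAt_id x) hNj
  have hΨ := hasFDerivAt_prim hγ_C1 x T'
  have hΨc' := hΨ.comp x (f := fun y : Fin m → ℝ => ((y, N * y j) : (Fin m → ℝ) × ℝ)) hσ
  have hΨc : HasFDerivAt (fun y : Fin m → ℝ => ∫ s in (0:ℝ)..(N * y j), γ y s)
      (((primCLM γ x T').comp (ContinuousLinearMap.fst ℝ (Fin m → ℝ) ℝ)
        + (ContinuousLinearMap.snd ℝ (Fin m → ℝ) ℝ).smulRight (γ x T')).comp
        ((ContinuousLinearMap.id ℝ (Fin m → ℝ)).prod (N • π))) x :=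
    hΨc'.congr_of_eventuallyEq (Filter.Eventually.of_forall fun y => rfl)
  have hγbar : HasFDerivAt (loopAverage γ) (primCLM γ x 1) x :=
    hasFDerivAt_parametric' hγ_C1 1 x
  have hprod : HasFDerivAt (fun y : Fin m → ℝ => (N * y j) • loopAverage γ y)
      (T' • primCLM γ x 1 + (N • π).smulRight (loopAverage γ x)) x :=
    hNj.smul hγbar
  set L : (Fin m → ℝ) →L[ℝ] EuclideanSpace ℝ (Fin n) := fderiv ℝ f₀ x + N⁻¹ •
      ((((primCLM γ x T').comp (ContinuousLinearMap.fst ℝ (Fin m → ℝ) ℝ)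
        + (ContinuousLinearMap.snd ℝ (Fin m → ℝ) ℝ).smulRight (γ x T')).comp
        ((ContinuousLinearMap.id ℝ (Fin m → ℝ)).prod (N • π)))
      - (T' • primCLM γ x 1 + (N • π).smulRight (loopAverage γ x)))
      with hL
  have htot : HasFDerivAt (corrugationProcess f₀ γ j N) L x := by
    have h1 : HasFDerivAt (fun y : Fin m → ℝ => f₀ y + N⁻¹ •
        ((∫ s in (0:ℝ)..(N * y j), γ y s) - (N * y j) • loopAverage γ y)) L x :=
      (hf₀ x).hasFDerivAt.add ((hΨc.sub hprod).const_smul N⁻¹)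
    refine h1.congr_of_eventuallyEq (Filter.Eventually.of_forall fun y => ?_)
    show f₀ y + N⁻¹ • ∫ s in (0:ℝ)..(N * y j), (γ y s - loopAverage γ y) = _
    congr 2
    rw [intervalIntegral.integral_sub (hiγ y 0 (N * y j)) intervalIntegrable_const,
      intervalIntegral.integral_const, sub_zero]
  rw [htot.fderiv]
  -- evaluate L at e
  have hLe : L e - γ x T' = N⁻¹ • R x T' := by
    have hπe : π e = 1 := by
      show e j = 1
      simp [he]
    simp only [hL, ContinuousLinearMap.add_apply, ContinuousLinearMap.coe_smul',
      Pi.smul_apply, ContinuousLinearMap.sub_apply, ContinuousLinearMap.comp_apply,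
      ContinuousLinearMap.prod_apply, ContinuousLinearMap.coe_id', id_eq,
      ContinuousLinearMap.coe_fst', ContinuousLinearMap.coe_snd',
      ContinuousLinearMap.smulRight_apply, hπe, havg x, hR]
    rw [smul_eq_mul, mul_one]
    rw [smul_sub, smul_add, smul_add, smul_smul N⁻¹ N, inv_mul_cancel₀ hN.ne', one_smul,
      smul_smul N⁻¹ N, inv_mul_cancel₀ hN.ne', one_smul, smul_smul N⁻¹ T']
    rw [smul_sub, ← smul_smul]
    abel
  rw [hLe, norm_smul, Real.norm_eq_abs, abs_of_pos (inv_pos.2 hN), div_eq_inv_mul]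
  refine mul_le_mul_of_nonneg_left ?_ (inv_nonneg.2 hN.le)
  have hxIcc : x ∈ Icc (0 : Fin m → ℝ) 1 :=
    ⟨Pi.le_def.2 fun i => by simpa using (hx i).1, Pi.le_def.2 fun i => by simpa using (hx i).2⟩
  rw [hRfract x T']
  exact hRb x hxIcc (Int.fract T') ⟨Int.fract_nonneg _, (Int.fract_lt_one _).le⟩
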